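/- For a steady Korteweg fluid (no momentum balance assumed), at every point of B the following identity holds: −ι grad p̄ = ϑ grad η − grad ξ + ι grad p̌ − ι² grad(div(ρ ∂_gφ)) − (grad(∂_gφ))ᵀ grad ι − ι (div(ρ ∂_gφ)) grad ι, where (grad(∂_gφ))ᵀ grad ι has components Σ_j ∂_i((∂_gφ)_j) ∂_jι and all partial derivatives of φ and χ are evaluated along the fields. -/

import Mathlib

noncomputable section

/-- Points of ℝ³. -/
abbrev V3 : Type := Fin 3 → ℝ

/-- Partial derivative ∂ᵢ of a scalar field on ℝ³. -/
def pd (i : Fin 3) (f : V3 → ℝ) (x : V3) : ℝ :=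
  fderiv ℝ f x (Pi.single i 1)

/-- Cross product on ℝ³. -/
def cross (a b : V3) : V3 :=
  ![a 1 * b 2 - a 2 * b 1,
    a 2 * b 0 - a 0 * b 2,
    a 0 * b 1 - a 1 * b 0]

/-- Curl of a vector field on ℝ³. -/
def curl (u : V3 → V3) (x : V3) : V3 :=
  ![pd 1 (fun y => u y 2) x - pd 2 (fun y => u y 1) x,
    pd 2 (fun y => u y 0) x - pd 0 (fun y => u y 2) x,
    pd 0 (fun y => u y 1) x - pd 1 (fun y => u y 0) x]

/-- A steady Korteweg fluid on an open set `B ⊆ ℝ³`: smooth fields `ρ > 0`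
(mass density), `η` (entropy), `v` (velocity), a smooth potential
`φ = φ(ι, g, η)` and a smooth kinetic co-energy `χ = χ(ι, ι̇)`. -/
structure KortewegFluid where
  B : Set V3
  hB : IsOpen B
  ρ : V3 → ℝ
  η : V3 → ℝ
  v : V3 → V3
  φ : ℝ × V3 × ℝ → ℝ
  χ : ℝ × ℝ → ℝ
  hρ : ContDiffOn ℝ (⊤ : ℕ∞) ρ B
  hη : ContDiffOn ℝ (⊤ : ℕ∞) η B
  hv : ContDiffOn ℝ (⊤ : ℕ∞) v B
  hφ : ContDiff ℝ (⊤ : ℕ∞) φ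
  hχ : ContDiff ℝ (⊤ : ℕ∞) χ
  hρpos : ∀ x ∈ B, 0 < ρ x

namespace KortewegFluid

variable (K : KortewegFluid)

/-- Specific volume `ι = 1/ρ`. -/
def ι (x : V3) : ℝ := (K.ρ x)⁻¹

/-- The point `(ι(x), grad ι(x), η(x))` at which `φ` and its partial
derivatives are evaluated. -/
def pt (x : V3) : ℝ × V3 × ℝ := (K.ι x, fun i => pd i K.ι x, K.η x)

/-- `∂_ιφ` evaluated along the fields. -/
def dφι (x : V3) : ℝ := fderiv ℝ K.φ (K.pt x) (1, 0, 0)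

/-- `∂_gφ` (vector of partial derivatives of `φ` w.r.t. the gradient slot)
evaluated along the fields. -/
def dφg (x : V3) : V3 := fun j => fderiv ℝ K.φ (K.pt x) (0, Pi.single j 1, 0)

/-- Temperature `ϑ = ∂_ηφ` evaluated along the fields. -/
def temp (x : V3) : ℝ := fderiv ℝ K.φ (K.pt x) (0, 0, 1)

/-- Convective rate `ι̇ = v · grad ι`. -/
def ιdot (x : V3) : ℝ := ∑ j, K.v x j * pd j K.ι x

/-- `∂_ιχ` evaluated along the fields. -/
def dχι (x : V3) : ℝ := fderiv ℝ K.χ (K.ι x, K.ιdot x) (1, 0)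

/-- The field `Π : x ↦ ∂_ι̇χ(ι(x), ι̇(x))`. -/
def Pi' (x : V3) : ℝ := fderiv ℝ K.χ (K.ι x, K.ιdot x) (0, 1)

/-- `div(ρ ∂_gφ)`. -/
def divρg (x : V3) : ℝ := ∑ j, pd j (fun y => K.ρ y * K.dφg y j) x

/-- Kinetic pressure `p̌ = ρι (v·grad Π) − ∂_ιχ`. -/
def pcheck (x : V3) : ℝ :=
  K.ρ x * K.ι x * (∑ j, K.v x j * pd j K.Pi' x) - K.dχι x

/-- Pressure `p̄ = −ρι ∂_ιφ + ι div(ρ ∂_gφ) − p̌`. -/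
def pbar (x : V3) : ℝ :=
  -(K.ρ x * K.ι x * K.dφι x) + K.ι x * K.divρg x - K.pcheck x

/-- Specific enthalpy `ξ = φ − ι ∂_ιφ − ∂_gφ · grad ι`. -/
def ξ (x : V3) : ℝ :=
  K.φ (K.pt x) - K.ι x * K.dφι x - ∑ j, K.dφg x j * pd j K.ι x

/-- Total enthalpy `h = (1/2)|v|² + ξ`. -/
def htot (x : V3) : ℝ := (1 / 2) * (∑ k, (K.v x k) ^ 2) + K.ξ x

/-- Korteweg stress `T^E = grad ι ⊗ ρ ∂_gφ`. -/
def TE (x : V3) (i j : Fin 3) : ℝ := pd i K.ι x * (K.ρ x * K.dφg x j)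

/-- Steady momentum balance `ρ (Dv)v = div T` with `T = −p̄ I − T^E`
(stated componentwise). -/
def MomentumBalance : Prop :=
  ∀ x ∈ K.B, ∀ i : Fin 3,
    K.ρ x * ∑ j, pd j (fun y => K.v y i) x * K.v x j
      = ∑ j, pd j (fun y => -(K.pbar y) * (if i = j then (1:ℝ) else 0) - K.TE y i j) x

end KortewegFluid
section PdLemmas

open Filter

lemma pd_congr_nhds {f g : V3 → ℝ} {x : V3} (h : f =ᶠ[nhds x] g) (i : Fin 3) :
    pd i f x = pd i g x := by
  unfold pd; rw [h.fderiv_eq]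

lemma pd_add {f g : V3 → ℝ} {x : V3} (hf : DifferentiableAt ℝ f x)
    (hg : DifferentiableAt ℝ g x) (i : Fin 3) :
    pd i (fun y => f y + g y) x = pd i f x + pd i g x := by
  unfold pd; rw [fderiv_fun_add hf hg]; simp

lemma pd_sub {f g : V3 → ℝ} {x : V3} (hf : DifferentiableAt ℝ f x)
    (hg : DifferentiableAt ℝ g x) (i : Fin 3) :
    pd i (fun y => f y - g y) x = pd i f x - pd i g x := by
  unfold pd; rw [fderiv_fun_sub hf hg]; simp

lemma pd_neg {f : V3 → ℝ} {x : V3} (i : Fin 3) :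
    pd i (fun y => -(f y)) x = -(pd i f x) := by
  unfold pd; rw [fderiv_fun_neg]; simp

lemma pd_mul {f g : V3 → ℝ} {x : V3} (hf : DifferentiableAt ℝ f x)
    (hg : DifferentiableAt ℝ g x) (i : Fin 3) :
    pd i (fun y => f y * g y) x = f x * pd i g x + g x * pd i f x := by
  unfold pd; rw [fderiv_fun_mul hf hg]; simp

lemma pd_sum {s : Finset (Fin 3)} {f : Fin 3 → V3 → ℝ} {x : V3}
    (hf : ∀ j ∈ s, DifferentiableAt ℝ (f j) x) (i : Fin 3) :
    pd i (fun y => ∑ j ∈ s, f j y) x = ∑ j ∈ s, pd i (f j) x := by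
  unfold pd; rw [fderiv_fun_sum hf]; simp

/-- Decomposition of a continuous linear functional on `ℝ × V3 × ℝ`. -/
lemma clm_decomp (L : (ℝ × V3 × ℝ) →L[ℝ] ℝ) (a : ℝ) (g : V3) (b : ℝ) :
    L (a, g, b) = a * L (1, 0, 0) + (∑ j, g j * L (0, Pi.single j 1, 0)) + b * L (0, 0, 1) := by
  have h1 : (a, g, b) = a • ((1:ℝ), (0:V3), (0:ℝ)) + ((0:ℝ), g, (0:ℝ))
      + b • ((0:ℝ), (0:V3), (1:ℝ)) := by
    simp [Prod.ext_iff]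
  have h2 : ((0:ℝ), g, (0:ℝ)) = ∑ j, ((0:ℝ), g j • (Pi.single j (1:ℝ) : V3), (0:ℝ)) := by
    have hg : g = ∑ j, g j • (Pi.single j (1:ℝ) : V3) := by
      ext k; simp [Finset.sum_apply, Pi.single_apply]
    rw [Prod.ext_iff, Prod.ext_iff]
    refine ⟨by simp [Prod.fst_sum], ?_, by simp [Prod.fst_sum, Prod.snd_sum]⟩
    simp only [Prod.fst_sum, Prod.snd_sum]
    exact hg
  rw [h1]
  simp only [map_add, map_smul, smul_eq_mul, h2, map_sum]
  congr 1
  congr 1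
  refine Finset.sum_congr rfl fun j _ => ?_
  have : ((0:ℝ), g j • (Pi.single j (1:ℝ) : V3), (0:ℝ)) = g j • ((0:ℝ), (Pi.single j (1:ℝ) : V3), (0:ℝ)) := by
    simp [Prod.ext_iff]
  rw [this, map_smul, smul_eq_mul]

end PdLemmas
namespace KortewegFluid

variable (K : KortewegFluid)

lemma smooth_ι : ContDiffOn ℝ (⊤:ℕ∞) K.ι K.B :=
  K.hρ.inv (fun x hx => (K.hρpos x hx).ne')

lemma smooth_pd {f : V3 → ℝ} (hf : ContDiffOn ℝ (⊤:ℕ∞) f K.B) (i : Fin 3) :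
    ContDiffOn ℝ (⊤:ℕ∞) (fun y => pd i f y) K.B := by
  have h := hf.fderiv_of_isOpen K.hB (le_rfl :
    ((⊤:ℕ∞) : WithTop ℕ∞) + 1 ≤ ((⊤:ℕ∞) : WithTop ℕ∞))
  exact h.clm_apply contDiffOn_const

lemma diffAt {f : V3 → ℝ} (hf : ContDiffOn ℝ (⊤:ℕ∞) f K.B) {x : V3} (hx : x ∈ K.B) :
    DifferentiableAt ℝ f x :=
  (hf.differentiableOn (by simp)).differentiableAt (K.hB.mem_nhds hx)

lemma smooth_gradι : ContDiffOn ℝ (⊤:ℕ∞) (fun y (j : Fin 3) => pd j K.ι y) K.B :=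
  contDiffOn_pi.2 fun j => K.smooth_pd K.smooth_ι j

lemma smooth_pt : ContDiffOn ℝ (⊤:ℕ∞) K.pt K.B :=
  K.smooth_ι.prodMk (K.smooth_gradι.prodMk K.hη)

lemma smooth_dphi (c : ℝ × V3 × ℝ) :
    ContDiffOn ℝ (⊤:ℕ∞) (fun y => fderiv ℝ K.φ (K.pt y) c) K.B := by
  have h1 : ContDiff ℝ (⊤:ℕ∞) (fderiv ℝ K.φ) := K.hφ.fderiv_right (le_rfl :
    ((⊤:ℕ∞) : WithTop ℕ∞) + 1 ≤ ((⊤:ℕ∞) : WithTop ℕ∞))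
  exact (h1.comp_contDiffOn K.smooth_pt).clm_apply contDiffOn_const

lemma smooth_dφι : ContDiffOn ℝ (⊤:ℕ∞) K.dφι K.B := K.smooth_dphi (1, 0, 0)

lemma smooth_dφg (j : Fin 3) : ContDiffOn ℝ (⊤:ℕ∞) (fun y => K.dφg y j) K.B :=
  K.smooth_dphi (0, Pi.single j 1, 0)

lemma smooth_ιdot : ContDiffOn ℝ (⊤:ℕ∞) K.ιdot K.B := by
  refine ContDiffOn.sum fun j _ => ?_
  exact (contDiffOn_pi.1 K.hv j).mul (K.smooth_pd K.smooth_ι j)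

lemma smooth_dchi (c : ℝ × ℝ) :
    ContDiffOn ℝ (⊤:ℕ∞) (fun y => fderiv ℝ K.χ (K.ι y, K.ιdot y) c) K.B := by
  have h1 : ContDiff ℝ (⊤:ℕ∞) (fderiv ℝ K.χ) := K.hχ.fderiv_right (le_rfl :
    ((⊤:ℕ∞) : WithTop ℕ∞) + 1 ≤ ((⊤:ℕ∞) : WithTop ℕ∞))
  exact (h1.comp_contDiffOn (K.smooth_ι.prodMk K.smooth_ιdot)).clm_apply contDiffOn_const

lemma smooth_Pi' : ContDiffOn ℝ (⊤:ℕ∞) K.Pi' K.B := K.smooth_dchi (0, 1)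

lemma smooth_dχι : ContDiffOn ℝ (⊤:ℕ∞) K.dχι K.B := K.smooth_dchi (1, 0)

lemma smooth_pcheck : ContDiffOn ℝ (⊤:ℕ∞) K.pcheck K.B := by
  refine ContDiffOn.sub ?_ K.smooth_dχι
  refine ((K.hρ.mul K.smooth_ι).mul (ContDiffOn.sum fun j _ => ?_))
  exact (contDiffOn_pi.1 K.hv j).mul (K.smooth_pd K.smooth_Pi' j)

lemma smooth_divρg : ContDiffOn ℝ (⊤:ℕ∞) K.divρg K.B :=
  ContDiffOn.sum fun j _ => K.smooth_pd (K.hρ.mul (K.smooth_dφg j)) j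

lemma pd_phi_pt {x : V3} (hx : x ∈ K.B) (i : Fin 3) :
    pd i (fun y => K.φ (K.pt y)) x
      = pd i K.ι x * K.dφι x + (∑ j, pd i (fun y => pd j K.ι y) x * K.dφg x j)
        + pd i K.η x * K.temp x := by
  have dι := K.diffAt K.smooth_ι hx
  have dgrad : ∀ j, DifferentiableAt ℝ (fun y => pd j K.ι y) x :=
    fun j => K.diffAt (K.smooth_pd K.smooth_ι j) hx
  have dη := K.diffAt K.hη hx
  have dmid : DifferentiableAt ℝ (fun y (j : Fin 3) => pd j K.ι y) x :=
    differentiableAt_pi.2 dgrad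
  have dpt : DifferentiableAt ℝ K.pt x := dι.prodMk (dmid.prodMk dη)
  have dφ : DifferentiableAt ℝ K.φ (K.pt x) :=
    (K.hφ.differentiable (by simp)).differentiableAt
  have hcomp : pd i (fun y => K.φ (K.pt y)) x
      = fderiv ℝ K.φ (K.pt x) (fderiv ℝ K.pt x (Pi.single i 1)) := by
    unfold pd
    rw [show (fun y => K.φ (K.pt y)) = K.φ ∘ K.pt from rfl, fderiv_comp x dφ dpt]
    rfl
  have hpt : fderiv ℝ K.pt x (Pi.single i 1)
      = (pd i K.ι x, fun j => pd i (fun y => pd j K.ι y) x, pd i K.η x) := by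
    rw [show K.pt = fun y => (K.ι y, (fun (j : Fin 3) => pd j K.ι y, K.η y)) from rfl]
    rw [DifferentiableAt.fderiv_prodMk dι (dmid.prodMk dη),
        DifferentiableAt.fderiv_prodMk dmid dη, fderiv_pi dgrad]
    simp [pd, ContinuousLinearMap.prod_apply, ContinuousLinearMap.pi_apply]
  rw [hcomp, hpt, clm_decomp]
  rfl

end KortewegFluid

/-- for a steady Korteweg fluid (no momentum balance assumed),
at every point of `B` (componentwise):
`−ι grad p̄ = ϑ grad η − grad ξ + ι grad p̌ − ι² grad(div(ρ ∂_gφ))`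
`  − (grad(∂_gφ))ᵀ grad ι − ι (div(ρ ∂_gφ)) grad ι`. -/
theorem korteweg_pressure_gradient_identity (K : KortewegFluid) :
    ∀ x ∈ K.B, ∀ i : Fin 3,
      -(K.ι x * pd i K.pbar x)
        = K.temp x * pd i K.η x
          - pd i K.ξ x
          + K.ι x * pd i K.pcheck x
          - (K.ι x) ^ 2 * pd i K.divρg x
          - (∑ j, pd i (fun y => K.dφg y j) x * pd j K.ι x)
          - K.ι x * K.divρg x * pd i K.ι x := by
  intro x hx i
  have dι := K.diffAt K.smooth_ι hx
  have dgrad : ∀ j, DifferentiableAt ℝ (fun y => pd j K.ι y) x :=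
    fun j => K.diffAt (K.smooth_pd K.smooth_ι j) hx
  have ddφι := K.diffAt K.smooth_dφι hx
  have ddφg : ∀ j, DifferentiableAt ℝ (fun y => K.dφg y j) x :=
    fun j => K.diffAt (K.smooth_dφg j) hx
  have ddiv := K.diffAt K.smooth_divρg hx
  have dpcheck := K.diffAt K.smooth_pcheck hx
  have dφpt : DifferentiableAt ℝ (fun y => K.φ (K.pt y)) x := by
    have := K.diffAt ((K.hφ.comp_contDiffOn K.smooth_pt)) hx
    exact this
  -- pbar near x
  have hev : K.pbar =ᶠ[nhds x]
      fun y => -(K.dφι y) + K.ι y * K.divρg y - K.pcheck y := by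
    filter_upwards [K.hB.mem_nhds hx] with y hy
    have h1 : K.ρ y * K.ι y = 1 := mul_inv_cancel₀ (K.hρpos y hy).ne'
    unfold KortewegFluid.pbar
    rw [h1, one_mul]
  have h1 : pd i K.pbar x
      = -(pd i K.dφι x) + (K.ι x * pd i K.divρg x + K.divρg x * pd i K.ι x)
        - pd i K.pcheck x := by
    rw [pd_congr_nhds hev,
        pd_sub ((ddφι.fun_neg).fun_add (dι.fun_mul ddiv)) dpcheck,
        pd_add ddφι.fun_neg (dι.fun_mul ddiv), pd_neg, pd_mul dι ddiv]
  -- sum expansion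
  have hsum : pd i (fun y => ∑ j, K.dφg y j * pd j K.ι y) x
      = (∑ j, pd i (fun y => pd j K.ι y) x * K.dφg x j)
        + ∑ j, pd i (fun y => K.dφg y j) x * pd j K.ι x := by
    rw [pd_sum (fun j _ => (ddφg j).fun_mul (dgrad j)) i, ← Finset.sum_add_distrib]
    refine Finset.sum_congr rfl fun j _ => ?_
    rw [pd_mul (ddφg j) (dgrad j) i]; ring
  have dS : DifferentiableAt ℝ (fun y => ∑ j, K.dφg y j * pd j K.ι y) x :=
    DifferentiableAt.fun_sum fun j _ => (ddφg j).fun_mul (dgrad j)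
  have h2 : pd i K.ξ x
      = pd i K.η x * K.temp x - K.ι x * pd i K.dφι x
        - ∑ j, pd i (fun y => K.dφg y j) x * pd j K.ι x := by
    rw [show K.ξ = fun y => (K.φ (K.pt y) - K.ι y * K.dφι y)
          - ∑ j, K.dφg y j * pd j K.ι y from rfl,
        pd_sub (dφpt.fun_sub (dι.fun_mul ddφι)) dS,
        pd_sub dφpt (dι.fun_mul ddφι), pd_mul dι ddφι, hsum, K.pd_phi_pt hx i]
    ring
  rw [h1, h2]
  ring
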